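/- Let 0 < A < B be real numbers and δ > 0 satisfy A^{−δ} + B^{−δ} = 1 (note A > 1 forces uniqueness of δ > 0 when A > 1). For s ∈ ℂ with Re s > 0, define Z̃(s) = ∏_{k=0}^∞ (1 − A^{−(s+k)} − B^{−(s+k)}). If A > 1, then the infinite product converges for Re s > 0, Z̃(δ) = 0, and if log A / log B is irrational then s = δ is the only zero of Z̃ on the line Re s = δ. -/

import Mathlib

open Filter

private lemma hasProd_zero_of_zero {f : ℕ → ℂ} {k : ℕ} (h : f k = 0) : HasProd f 0 := by
  have hev : ∀ᶠ S in (atTop : Filter (Finset ℕ)), (0 : ℂ) = ∏ i ∈ S, f i := by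
    filter_upwards [Filter.eventually_ge_atTop ({k} : Finset ℕ)] with S hS
    exact (Finset.prod_eq_zero (hS (Finset.mem_singleton_self k)) h).symm
  exact Filter.Tendsto.congr' hev tendsto_const_nhds

private lemma norm_cexp_aux (s : ℂ) (k : ℕ) (L : ℝ) :
    ‖Complex.exp (-(s + k) * L)‖ = Real.exp (-(s.re + k) * L) := by
  rw [Complex.norm_exp]
  congr 1
  simp [Complex.mul_re]

private lemma summable_exp_aux (σ L : ℝ) (hL : 0 < L) :
    Summable (fun k : ℕ => Real.exp (-(σ + k) * L)) := by
  have h : ∀ k : ℕ, Real.exp (-(σ + k) * L) = Real.exp (-σ * L) * Real.exp (-L) ^ k := by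
    intro k
    rw [← Real.exp_nat_mul, ← Real.exp_add]
    ring_nf
  rw [funext h]
  exact (summable_geometric_of_lt_one (Real.exp_nonneg _)
    (Real.exp_lt_one_iff.mpr (by linarith))).mul_left _

private lemma mzeros_aux (A B : ℝ) (hA : 1 < A) (hB : 1 < B) (s : ℂ)
    (hne : ∀ k : ℕ, (1 - Complex.exp (-(s + k) * Real.log A)
      - Complex.exp (-(s + k) * Real.log B)) ≠ 0) :
    HasProd (fun k : ℕ => 1 - Complex.exp (-(s + k) * Real.log A)
      - Complex.exp (-(s + k) * Real.log B))
      (Complex.exp (∑' k : ℕ, Complex.log (1 - Complex.exp (-(s + k) * Real.log A)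
      - Complex.exp (-(s + k) * Real.log B)))) := by
  set g : ℕ → ℂ := fun k => Complex.exp (-(s + k) * Real.log A)
      + Complex.exp (-(s + k) * Real.log B) with hg
  have hLA : 0 < Real.log A := Real.log_pos hA
  have hLB : 0 < Real.log B := Real.log_pos hB
  have hsum : Summable (fun k : ℕ => ‖g k‖) := by
    apply Summable.of_nonneg_of_le (fun k => norm_nonneg _)
      (fun k => (norm_add_le _ _).trans_eq (by rw [norm_cexp_aux, norm_cexp_aux]))
    exact (summable_exp_aux s.re _ hLA).add (summable_exp_aux s.re _ hLB)
  have hev : ∀ᶠ k : ℕ in atTop, ‖g k‖ ≤ 1/2 := by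
    have := hsum.tendsto_atTop_zero
    filter_upwards [this.eventually_le_const (by norm_num : (0:ℝ) < 1/2)] with k hk
    exact hk
  have hlog : Summable (fun k : ℕ => Complex.log (1 - Complex.exp (-(s + k) * Real.log A)
      - Complex.exp (-(s + k) * Real.log B))) := by
    apply Summable.of_norm_bounded_eventually (g := fun k => 3/2 * ‖g k‖) (hsum.mul_left _)
    rw [Nat.cofinite_eq_atTop]
    filter_upwards [hev] with k hk
    have h1 : (1 : ℂ) - Complex.exp (-(s + k) * Real.log A)
        - Complex.exp (-(s + k) * Real.log B) = 1 + (-(g k)) := by rw [hg]; ring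
    rw [h1]
    calc ‖Complex.log (1 + -(g k))‖ ≤ 3/2 * ‖-(g k)‖ :=
          Complex.norm_log_one_add_half_le_self (by rwa [norm_neg])
      _ = 3/2 * ‖g k‖ := by rw [norm_neg]
  have := hlog.hasSum.cexp
  have heq : (Complex.exp ∘ fun k : ℕ => Complex.log (1 - Complex.exp (-(s + k) * Real.log A)
      - Complex.exp (-(s + k) * Real.log B)))
      = fun k : ℕ => 1 - Complex.exp (-(s + k) * Real.log A)
      - Complex.exp (-(s + k) * Real.log B) :=
    funext fun k => Complex.exp_log (hne k)
  rwa [heq] at this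

/-- The model zeta function `Z̃(s) = ∏_{k≥0} (1 − A^{−(s+k)} − B^{−(s+k)})`:
for `1 < A < B` and `δ > 0` with `A^{−δ} + B^{−δ} = 1`, the product converges for
`Re s > 0`, vanishes at `s = δ`, and if `log A / log B` is irrational then `s = δ`
is the only zero on the line `Re s = δ`. -/
theorem model_zeta_zeros (A B δ : ℝ) (hA : 1 < A) (hAB : A < B) (hδ : 0 < δ)
    (hdim : A ^ (-δ) + B ^ (-δ) = 1) :
    (∀ s : ℂ, 0 < s.re → Multipliable (fun k : ℕ =>
        1 - Complex.exp (-(s + k) * Real.log A)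
          - Complex.exp (-(s + k) * Real.log B))) ∧
    (∏' k : ℕ, (1 - Complex.exp (-((δ : ℂ) + k) * Real.log A)
          - Complex.exp (-((δ : ℂ) + k) * Real.log B))) = 0 ∧
    (Irrational (Real.log A / Real.log B) →
      ∀ s : ℂ, s.re = δ →
        (∏' k : ℕ, (1 - Complex.exp (-(s + k) * Real.log A)
          - Complex.exp (-(s + k) * Real.log B))) = 0 → s = δ) := by
  have hB : 1 < B := hA.trans hAB
  have hLA : 0 < Real.log A := Real.log_pos hA
  have hLB : 0 < Real.log B := Real.log_pos hB
  -- coercion of exp values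
  have hexp : ∀ (C : ℝ), 0 < C → ∀ k : ℕ,
      Complex.exp (-((δ:ℂ) + k) * Real.log C) = ((C ^ (-(δ + k)) : ℝ) : ℂ) := by
    intro C hC k
    rw [Real.rpow_def_of_pos hC, Complex.ofReal_exp]
    congr 1
    push_cast
    ring
  -- part 2 : the factor k = 0 vanishes at s = δ
  have hfac0 : (1 : ℂ) - Complex.exp (-((δ:ℂ) + (0:ℕ)) * Real.log A)
      - Complex.exp (-((δ:ℂ) + (0:ℕ)) * Real.log B) = 0 := by
    rw [hexp A (by linarith) 0, hexp B (by linarith) 0]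
    have h1 : ((A ^ (-δ) : ℝ) : ℂ) + ((B ^ (-δ) : ℝ) : ℂ) = 1 := by
      rw [← Complex.ofReal_add, hdim, Complex.ofReal_one]
    have e0 : -(δ + ((0:ℕ):ℝ)) = -δ := by norm_num
    rw [e0]
    linear_combination -h1
  refine ⟨?_, ?_, ?_⟩
  · -- multipliability
    intro s hs
    by_cases hne : ∀ k : ℕ, (1 - Complex.exp (-(s + k) * Real.log A)
        - Complex.exp (-(s + k) * Real.log B)) ≠ 0
    · exact (mzeros_aux A B hA hB s hne).multipliable
    · push_neg at hne
      obtain ⟨k, hk⟩ := hne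
      exact (hasProd_zero_of_zero hk).multipliable
  · -- vanishing at δ
    exact (hasProd_zero_of_zero (f := fun k : ℕ =>
      1 - Complex.exp (-((δ:ℂ) + k) * Real.log A)
        - Complex.exp (-((δ:ℂ) + k) * Real.log B)) (k := 0) hfac0).tprod_eq
  · -- uniqueness on the line Re s = δ
    intro hirr s hre hzero
    -- there must be a vanishing factor
    have hne : ∃ k : ℕ, (1 - Complex.exp (-(s + k) * Real.log A)
        - Complex.exp (-(s + k) * Real.log B)) = 0 := by
      by_contra hcon
      push_neg at hcon
      have := (mzeros_aux A B hA hB s hcon).tprod_eq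
      rw [hzero] at this
      exact (Complex.exp_ne_zero _) this.symm
    obtain ⟨k, hk⟩ := hne
    have hsum1 : Complex.exp (-(s + k) * Real.log A)
        + Complex.exp (-(s + k) * Real.log B) = 1 := by linear_combination -hk
    have hnA : ‖Complex.exp (-(s + k) * Real.log A)‖ = Real.exp (-(δ + k) * Real.log A) := by
      rw [norm_cexp_aux, hre]
    have hnB : ‖Complex.exp (-(s + k) * Real.log B)‖ = Real.exp (-(δ + k) * Real.log B) := by
      rw [norm_cexp_aux, hre]
    -- real version of hdim
    have hd : Real.exp (-δ * Real.log A) + Real.exp (-δ * Real.log B) = 1 := by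
      rw [show -δ * Real.log A = Real.log A * -δ by ring,
        show -δ * Real.log B = Real.log B * -δ by ring,
        ← Real.rpow_def_of_pos (by linarith), ← Real.rpow_def_of_pos (by linarith), hdim]
    -- k must be 0
    have hk0 : k = 0 := by
      by_contra hkne
      have hk1 : (1 : ℝ) ≤ (k : ℕ) := by exact_mod_cast Nat.one_le_iff_ne_zero.mpr hkne
      have h1 : (1:ℝ) = ‖Complex.exp (-(s + k) * Real.log A)
          + Complex.exp (-(s + k) * Real.log B)‖ := by rw [hsum1]; simp
      have h2 := (norm_add_le (Complex.exp (-(s + k) * Real.log A))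
        (Complex.exp (-(s + k) * Real.log B)))
      rw [hnA, hnB] at h2
      have h3 : Real.exp (-(δ + k) * Real.log A) < Real.exp (-δ * Real.log A) :=
        Real.exp_lt_exp.mpr (by nlinarith)
      have h4 : Real.exp (-(δ + k) * Real.log B) < Real.exp (-δ * Real.log B) :=
        Real.exp_lt_exp.mpr (by nlinarith)
      rw [← h1] at h2
      linarith
    subst hk0
    -- equality case of the triangle inequality
    set u := Complex.exp (-(s + (0:ℕ)) * Real.log A) with hu
    set v := Complex.exp (-(s + (0:ℕ)) * Real.log B) with hv
    have hpq : Real.exp (-(δ + (0:ℕ)) * Real.log A) + Real.exp (-(δ + (0:ℕ)) * Real.log B) = 1 := by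
      push_cast
      rw [add_zero]
      exact hd
    have hur : u.re ≤ Real.exp (-(δ + (0:ℕ)) * Real.log A) := by
      rw [← hnA]; exact (Complex.re_le_norm u)
    have hvr : v.re ≤ Real.exp (-(δ + (0:ℕ)) * Real.log B) := by
      rw [← hnB]; exact (Complex.re_le_norm v)
    have hres : u.re + v.re = 1 := by
      have := congrArg Complex.re hsum1
      simpa using this
    have hue : u.re = Real.exp (-(δ + (0:ℕ)) * Real.log A) := by linarith
    have huim : u.im = 0 := by
      have h5 : ‖u‖ ^ 2 = u.re ^ 2 + u.im ^ 2 := by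
        rw [Complex.sq_norm, Complex.normSq_apply]; ring
      have h6 : ‖u‖ = u.re := by
        rw [hnA, hue]
      rw [h6] at h5
      have h7 : u.im ^ 2 = 0 := by linarith
      exact sq_eq_zero_iff.mp h7
    have huval : u = ((Real.exp (-(δ + (0:ℕ)) * Real.log A) : ℝ) : ℂ) := by
      apply Complex.ext
      · rw [Complex.ofReal_re]; exact hue
      · rw [Complex.ofReal_im]; exact huim
    -- similarly for v
    have hve : v.re = Real.exp (-(δ + (0:ℕ)) * Real.log B) := by linarith
    have hvim : v.im = 0 := by
      have h5 : ‖v‖ ^ 2 = v.re ^ 2 + v.im ^ 2 := by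
        rw [Complex.sq_norm, Complex.normSq_apply]; ring
      have h6 : ‖v‖ = v.re := by
        rw [hnB, hve]
      rw [h6] at h5
      have h7 : v.im ^ 2 = 0 := by linarith
      exact sq_eq_zero_iff.mp h7
    have hvval : v = ((Real.exp (-(δ + (0:ℕ)) * Real.log B) : ℝ) : ℂ) := by
      apply Complex.ext
      · rw [Complex.ofReal_re]; exact hve
      · rw [Complex.ofReal_im]; exact hvim
    -- turn into exp equalities and extract integers
    have heA : Complex.exp (-(s + (0:ℕ)) * Real.log A)
        = Complex.exp (((-(δ + (0:ℕ)) * Real.log A : ℝ) : ℂ)) := by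
      rw [← hu, huval, Complex.ofReal_exp]
    have heB : Complex.exp (-(s + (0:ℕ)) * Real.log B)
        = Complex.exp (((-(δ + (0:ℕ)) * Real.log B : ℝ) : ℂ)) := by
      rw [← hv, hvval, Complex.ofReal_exp]
    obtain ⟨m, hm⟩ := Complex.exp_eq_exp_iff_exists_int.mp heA
    obtain ⟨n, hn⟩ := Complex.exp_eq_exp_iff_exists_int.mp heB
    have hmim : -s.im * Real.log A = m * (2 * Real.pi) := by
      have := congrArg Complex.im hm
      simpa [Complex.mul_im, Complex.add_im, Complex.mul_re] using this
    have hnim : -s.im * Real.log B = n * (2 * Real.pi) := by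
      have := congrArg Complex.im hn
      simpa [Complex.mul_im, Complex.add_im, Complex.mul_re] using this
    by_cases him : s.im = 0
    · apply Complex.ext
      · rw [hre, Complex.ofReal_re]
      · rw [him, Complex.ofReal_im]
    · exfalso
      have hn0 : (n : ℝ) ≠ 0 := by
        intro h
        rw [h, zero_mul] at hnim
        exact (mul_ne_zero (neg_ne_zero.mpr him) (ne_of_gt hLB)) hnim
      have hcancel : (-s.im) * (Real.log A * n) = (-s.im) * (Real.log B * m) := by
        linear_combination (n : ℝ) * hmim - (m : ℝ) * hnim
      have hkey : Real.log A * n = Real.log B * m :=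
        mul_left_cancel₀ (neg_ne_zero.mpr him) hcancel
      apply hirr
      refine ⟨(m : ℚ) / (n : ℚ), ?_⟩
      have hn0' : (n : ℚ) ≠ 0 := by exact_mod_cast (fun h => hn0 (by exact_mod_cast h))
      push_cast
      rw [div_eq_div_iff (by exact_mod_cast hn0') (ne_of_gt hLB)]
      linarith
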